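/- Let τ > 0 and χ ∈ ℝ with −1 < cosh(τ/2) − e^{−χ}/2 < 1, and set A = e^{χ/2 + τ/4}, B = e^{χ/2 − τ/4}. Then the function (u,v) ↦ ln|1 + A e^{iu} + B e^{iv}| is Lebesgue integrable on [0,2π]², and (1/(2π²)) ∫_{0}^{2π} ∫_{0}^{2π} ln|1 + A e^{iu} + B e^{iv}| du dv = ∫_{−∞}^{χ} (1 − θ̄*(τ,s)/π) ds, where θ̄*(τ,s) = arccos( max(−1, min(1, cosh(τ/2) − e^{−s}/2) ) ). -/

import Mathlib

open MeasureTheory Real Set Metric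

lemma core (w : ℂ) (hw : norm w < 1) :
    ∫ v in (0:ℝ)..(2*π), Real.log (norm (1 + w * Complex.exp (v * Complex.I))) = 0 := by
  have hslit : ∀ z ∈ closedBall (0:ℂ) 1, (1 + w * z) ∈ Complex.slitPlane := by
    intro z hz
    rw [Complex.mem_slitPlane_iff]
    left
    have h1 : norm (w * z) < 1 := by
      rw [norm_mul]
      calc norm w * norm z ≤ norm w * 1 := by
            apply mul_le_mul_of_nonneg_left _ (norm_nonneg w)
            simpa [Complex.dist_eq] using hz
        _ < 1 := by simpa using hw
    have h2 : |(w * z).re| < 1 := lt_of_le_of_lt (Complex.abs_re_le_norm _) h1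
    have h3 : (1 + w * z).re = 1 + (w * z).re := by simp
    rw [h3]
    linarith [abs_lt.mp h2]
  set f : ℂ → ℂ := fun z => Complex.log (1 + w * z) with hf
  have hdc : DiffContOnCl ℂ f (ball (0:ℂ) 1) := by
    constructor
    · intro z hz
      apply DifferentiableAt.differentiableWithinAt
      exact (Complex.differentiableAt_log (hslit z (ball_subset_closedBall hz))).comp z
        ((differentiableAt_const _).add (differentiableAt_id.const_mul w))
    · rw [closure_ball (0:ℂ) one_ne_zero]
      exact ContinuousOn.clog (Continuous.continuousOn (by continuity)) hslit
  have hci := hdc.circleIntegral_sub_inv_smul (w := 0) (by simp)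
  have h0 : f 0 = 0 := by simp [hf]
  rw [h0, smul_zero] at hci
  rw [circleIntegral] at hci
  have hint : ∀ θ : ℝ, deriv (circleMap 0 1 : ℝ → ℂ) θ • (circleMap 0 1 θ - 0)⁻¹ • f (circleMap 0 1 θ)
      = Complex.I * f (circleMap 0 1 θ) := by
    intro θ
    rw [deriv_circleMap, smul_eq_mul, smul_eq_mul, sub_zero]
    have hne : circleMap 0 1 θ ≠ 0 := circleMap_ne_center one_ne_zero
    field_simp [circleMap]
  simp only [hint] at hci
  rw [intervalIntegral.integral_const_mul] at hci
  have hflog : ∫ θ in (0:ℝ)..(2*π), f (circleMap 0 1 θ) = 0 := by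
    rcases mul_eq_zero.mp hci with h | h
    · exact absurd h Complex.I_ne_zero
    · exact h
  have hmem : ∀ x : ℝ, circleMap 0 1 x ∈ closedBall (0:ℂ) 1 := by
    intro x; simp [circleMap, Complex.dist_eq]
  have hintg : IntervalIntegrable (fun θ => f (circleMap 0 1 θ)) volume 0 (2*π) := by
    apply ContinuousOn.intervalIntegrable
    apply ContinuousOn.clog
    · exact Continuous.continuousOn (by continuity)
    · intro x _
      exact hslit _ (hmem x)
  have hre := Complex.reCLM.intervalIntegral_comp_comm hintg
  rw [hflog] at hre
  simp only [Complex.reCLM_apply] at hre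
  rw [show (0:ℂ).re = 0 from rfl] at hre
  refine Eq.trans ?_ hre
  apply intervalIntegral.integral_congr
  intro v _
  simp only [hf, Complex.log_re, circleMap]
  norm_num

lemma abs_one_add_pos {w z : ℂ} (hw : norm w < 1) (hz : norm z = 1) :
    0 < norm (1 + w * z) := by
  have h1 : norm ((1 + w * z) + (-(w * z))) ≤ norm (1 + w * z) + norm (-(w * z)) :=
    norm_add_le _ _
  have h2 : norm (w * z) < 1 := by rw [norm_mul, hz, mul_one]; exact hw
  simp only [add_neg_cancel_right, norm_one, norm_neg] at h1
  linarith

lemma ring_integral (c : ℂ) (b : ℝ) (hb : 0 < b) (hc0 : c ≠ 0) (hne : norm c ≠ b) :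
    ∫ v in (0:ℝ)..(2*π), Real.log (norm (c + b * Complex.exp (v * Complex.I)))
      = 2 * π * max (Real.log (norm c)) (Real.log b) := by
  have hbC : (b:ℂ) ≠ 0 := Complex.ofReal_ne_zero.mpr hb.ne'
  rcases lt_or_gt_of_ne hne with hlt | hgt
  · -- |c| < b
    have hmax : max (Real.log (norm c)) (Real.log b) = Real.log b :=
      max_eq_right ((Real.log_le_log_iff ((norm_pos_iff.mpr hc0)) hb).mpr hlt.le)
    rw [hmax]
    set w : ℂ := (starRingEnd ℂ) c / b with hwdef
    have hwabs : norm w < 1 := by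
      rw [hwdef, norm_div, Complex.norm_conj]
      simpa [Complex.norm_real, Real.norm_eq_abs, abs_of_pos hb] using (div_lt_one hb).mpr hlt
    have hpt : ∀ v : ℝ, norm (c + b * Complex.exp (v * Complex.I))
        = b * norm (1 + w * Complex.exp (v * Complex.I)) := by
      intro v
      have h1 : (b:ℂ) * (1 + w * Complex.exp (v * Complex.I))
          = b + (starRingEnd ℂ) c * Complex.exp (v * Complex.I) := by
        rw [hwdef]; field_simp
      have h2 : (starRingEnd ℂ) ((b:ℂ) + (starRingEnd ℂ) c * Complex.exp ((v:ℂ) * Complex.I))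
          = (b:ℂ) + c * Complex.exp (-(v:ℂ) * Complex.I) := by
        rw [map_add, map_mul, ← Complex.exp_conj]
        simp [Complex.conj_ofReal, Complex.conj_I]
      have he : Complex.exp (-(v:ℂ) * Complex.I) * Complex.exp ((v:ℂ) * Complex.I) = 1 := by
        rw [← Complex.exp_add]; ring_nf; exact Complex.exp_zero
      have h3 : Complex.exp (-(v:ℂ) * Complex.I) * (c + b * Complex.exp (v * Complex.I))
          = (b:ℂ) + c * Complex.exp (-(v:ℂ) * Complex.I) := by
        linear_combination (b:ℂ) * he
      have h4 : norm (Complex.exp (-(v:ℂ) * Complex.I)) = 1 := by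
        rw [Complex.norm_exp]; simp
      calc norm (c + b * Complex.exp (v * Complex.I))
          = norm (Complex.exp (-(v:ℂ) * Complex.I) * (c + b * Complex.exp (v * Complex.I))) := by
            rw [norm_mul, h4, one_mul]
        _ = norm ((b:ℂ) + c * Complex.exp (-(v:ℂ) * Complex.I)) := by rw [h3]
        _ = norm ((b:ℂ) + (starRingEnd ℂ) c * Complex.exp ((v:ℂ) * Complex.I)) := by
            rw [← h2, Complex.norm_conj]
        _ = norm ((b:ℂ) * (1 + w * Complex.exp (v * Complex.I))) := by rw [h1]
        _ = b * norm (1 + w * Complex.exp (v * Complex.I)) := by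
            rw [norm_mul, Complex.norm_real, Real.norm_eq_abs, abs_of_pos hb]
    have hlogpt : ∀ v : ℝ, Real.log (norm (c + b * Complex.exp (v * Complex.I)))
        = Real.log b + Real.log (norm (1 + w * Complex.exp (v * Complex.I))) := by
      intro v
      rw [hpt v, Real.log_mul (ne_of_gt hb)]
      exact ne_of_gt (abs_one_add_pos hwabs (Complex.norm_exp_ofReal_mul_I v))
    simp only [hlogpt]
    rw [intervalIntegral.integral_add intervalIntegrable_const]
    · rw [core w hwabs, intervalIntegral.integral_const]
      simp [mul_comm]
    · apply ContinuousOn.intervalIntegrable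
      apply ContinuousOn.log
      · exact Continuous.continuousOn (by continuity)
      · intro x _
        exact ne_of_gt (abs_one_add_pos hwabs (Complex.norm_exp_ofReal_mul_I x))
  · -- |c| > b
    have hmax : max (Real.log (norm c)) (Real.log b) = Real.log (norm c) :=
      max_eq_left ((Real.log_le_log_iff hb ((norm_pos_iff.mpr hc0))).mpr hgt.le)
    rw [hmax]
    set w : ℂ := b / c with hwdef
    have hwabs : norm w < 1 := by
      rw [hwdef, norm_div]
      simpa [Complex.norm_real, Real.norm_eq_abs, abs_of_pos hb] using (div_lt_one ((norm_pos_iff.mpr hc0))).mpr hgt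
    have hpt : ∀ v : ℝ, norm (c + b * Complex.exp (v * Complex.I))
        = norm c * norm (1 + w * Complex.exp (v * Complex.I)) := by
      intro v
      rw [← norm_mul]
      congr 1
      rw [hwdef]
      field_simp
    have hlogpt : ∀ v : ℝ, Real.log (norm (c + b * Complex.exp (v * Complex.I)))
        = Real.log (norm c) + Real.log (norm (1 + w * Complex.exp (v * Complex.I))) := by
      intro v
      rw [hpt v, Real.log_mul ((norm_ne_zero_iff.mpr hc0))]
      exact ne_of_gt (abs_one_add_pos hwabs (Complex.norm_exp_ofReal_mul_I v))
    simp only [hlogpt]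
    rw [intervalIntegral.integral_add intervalIntegrable_const]
    · rw [core w hwabs, intervalIntegral.integral_const]
      simp [mul_comm]
    · apply ContinuousOn.intervalIntegrable
      apply ContinuousOn.log
      · exact Continuous.continuousOn (by continuity)
      · intro x _
        exact ne_of_gt (abs_one_add_pos hwabs (Complex.norm_exp_ofReal_mul_I x))

lemma log_le_log_of_le' {x y : ℝ} (hx : 0 ≤ x) (h : x ≤ y) (hy : 1 ≤ y) :
    Real.log x ≤ Real.log y := by
  rcases le_or_gt x 1 with h1 | h1
  · exact le_trans (Real.log_nonpos hx h1) (Real.log_nonneg hy)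
  · exact Real.log_le_log (by linarith) h

lemma prod_lemma (φ : ℝ → ℂ) (hφ : Continuous φ) (b : ℝ) (hb : 0 < b)
    (hnull : volume {u ∈ Icc (0:ℝ) (2*π) | norm (φ u) = b ∨ φ u = 0} = 0) :
    IntegrableOn (fun p : ℝ × ℝ =>
        Real.log (norm (φ p.1 + b * Complex.exp ((p.2:ℂ) * Complex.I))))
      (Icc (0:ℝ) (2*π) ×ˢ Icc (0:ℝ) (2*π)) volume ∧
    ∫ p in Icc (0:ℝ) (2*π) ×ˢ Icc (0:ℝ) (2*π),
        Real.log (norm (φ p.1 + b * Complex.exp ((p.2:ℂ) * Complex.I)))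
      = 2 * π * ∫ u in Icc (0:ℝ) (2*π), max (Real.log (norm (φ u))) (Real.log b) := by
  set F : ℝ × ℝ → ℝ := fun p =>
    Real.log (norm (φ p.1 + b * Complex.exp ((p.2:ℂ) * Complex.I))) with hF
  set μ : Measure ℝ := volume.restrict (Icc (0:ℝ) (2*π)) with hμ
  -- measure identification
  have hprodmeas : (volume : Measure (ℝ × ℝ)).restrict (Icc (0:ℝ) (2*π) ×ˢ Icc (0:ℝ) (2*π))
      = μ.prod μ := by
    rw [hμ, Measure.prod_restrict, ← Measure.volume_eq_prod]
  -- measurability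
  have hFmeas : Measurable F := by
    apply Real.measurable_log.comp
    apply Continuous.measurable
    continuity
  have hFaesm : AEStronglyMeasurable F (μ.prod μ) :=
    (hFmeas.stronglyMeasurable).aestronglyMeasurable
  -- bound on φ
  obtain ⟨M, hM⟩ : ∃ M : ℝ, ∀ u ∈ Icc (0:ℝ) (2*π), ‖φ u‖ ≤ M :=
    isCompact_Icc.exists_bound_of_continuousOn hφ.continuousOn
  have hM0 : 0 ≤ M := le_trans (norm_nonneg _) (hM 0 (by constructor <;> positivity))
  set C₀ : ℝ := Real.log (M + b + 1) with hC₀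
  have hC₀pos : 0 < C₀ := Real.log_pos (by linarith)
  -- pointwise upper bound on Icc ×ˢ Icc
  have hub : ∀ u ∈ Icc (0:ℝ) (2*π), ∀ v : ℝ, F (u, v) ≤ C₀ := by
    intro u hu v
    apply log_le_log_of_le' (norm_nonneg _) _ (by linarith)
    calc norm (φ u + b * Complex.exp ((v:ℂ) * Complex.I))
        ≤ norm (φ u) + norm ((b:ℂ) * Complex.exp ((v:ℂ) * Complex.I)) :=
          norm_add_le _ _
      _ ≤ M + b := by
          have h1 : norm ((b:ℂ) * Complex.exp ((v:ℂ) * Complex.I)) = b := by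
            rw [norm_mul, Complex.norm_exp_ofReal_mul_I, mul_one, Complex.norm_real, Real.norm_eq_abs,
              abs_of_pos hb]
          rw [h1]
          exact add_le_add_left (hM u hu) b
      _ ≤ M + b + 1 := by linarith
  -- a.e. good points
  have haegood : ∀ᵐ u ∂μ, u ∈ Icc (0:ℝ) (2*π) ∧ norm (φ u) ≠ b ∧ φ u ≠ 0 := by
    have h1 : ∀ᵐ u ∂μ, u ∈ Icc (0:ℝ) (2*π) := ae_restrict_mem measurableSet_Icc
    have h2 : ∀ᵐ u ∂μ, u ∉ {u ∈ Icc (0:ℝ) (2*π) | norm (φ u) = b ∨ φ u = 0} := by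
      have hB : μ {u ∈ Icc (0:ℝ) (2*π) | norm (φ u) = b ∨ φ u = 0} = 0 :=
        le_antisymm (le_trans (Measure.restrict_apply_le _ _) hnull.le) zero_le
      exact measure_eq_zero_iff_ae_notMem.mp hB
    filter_upwards [h1, h2] with u hu1 hu2
    refine ⟨hu1, ?_, ?_⟩
    · intro h; exact hu2 ⟨hu1, Or.inl h⟩
    · intro h; exact hu2 ⟨hu1, Or.inr h⟩
  -- for good u : continuity, integrability, value of inner integral
  have hcont : ∀ u : ℝ, norm (φ u) ≠ b → Continuous (fun v : ℝ => F (u, v)) := by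
    intro u hu
    apply Continuous.log
    · exact continuous_norm.comp ((continuous_const : Continuous fun _ : ℝ => φ u).add
        (continuous_const.mul
        (Complex.continuous_exp.comp (Complex.continuous_ofReal.mul continuous_const))))
    · intro v
      intro h0
      apply hu
      have : φ u + b * Complex.exp ((v:ℂ) * Complex.I) = 0 := by
        exact norm_eq_zero.mp h0
      have h2 : φ u = -(b * Complex.exp ((v:ℂ) * Complex.I)) := by
        linear_combination this
      rw [h2, norm_neg, norm_mul, Complex.norm_exp_ofReal_mul_I, mul_one,
        Complex.norm_real, Real.norm_eq_abs, abs_of_pos hb]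
  have hinner : ∀ u : ℝ, norm (φ u) ≠ b → φ u ≠ 0 →
      (IntegrableOn (fun v => F (u, v)) (Icc (0:ℝ) (2*π)) volume ∧
       ∫ v in Icc (0:ℝ) (2*π), F (u, v) = 2 * π * max (Real.log (norm (φ u))) (Real.log b)) := by
    intro u hu1 hu2
    constructor
    · exact ((hcont u hu1).continuousOn).integrableOn_compact isCompact_Icc
    · rw [MeasureTheory.integral_Icc_eq_integral_Ioc,
        ← intervalIntegral.integral_of_le (by positivity)]
      exact ring_integral (φ u) b hb hu2 hu1
  -- bound on the inner integral of |F|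
  have hbnd : ∀ u : ℝ, u ∈ Icc (0:ℝ) (2*π) → norm (φ u) ≠ b → φ u ≠ 0 →
      ∫ v, ‖F (u, v)‖ ∂μ ≤ 2 * (2*π) * C₀ + 2*π * |Real.log b| := by
    intro u hu h1 h2
    obtain ⟨hint, hval⟩ := hinner u h1 h2
    have hintr : Integrable (fun v => F (u, v)) μ := hint
    have habs : ∀ v : ℝ, ‖F (u, v)‖ = 2 * max (F (u, v)) 0 - F (u, v) := by
      intro v
      rw [Real.norm_eq_abs]
      rcases le_or_gt 0 (F (u, v)) with h | h
      · rw [abs_of_nonneg h, max_eq_left h]; ring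
      · rw [abs_of_neg h, max_eq_right h.le]; ring
    calc ∫ v, ‖F (u, v)‖ ∂μ = ∫ v, (2 * max (F (u, v)) 0 - F (u, v)) ∂μ := by
          congr 1; ext v; exact habs v
      _ = 2 * ∫ v, max (F (u, v)) 0 ∂μ - ∫ v, F (u, v) ∂μ := by
          rw [integral_sub (by exact (hintr.pos_part.const_mul 2)) hintr,
            integral_const_mul]
      _ ≤ 2 * (2*π * C₀) - 2 * π * max (Real.log (norm (φ u))) (Real.log b) := by
          have h3 : ∫ v, max (F (u, v)) 0 ∂μ ≤ 2*π * C₀ := by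
            have : ∫ v, max (F (u, v)) 0 ∂μ ≤ ∫ _, C₀ ∂μ := by
              apply integral_mono_ae hintr.pos_part (integrable_const _)
              filter_upwards [ae_restrict_mem (measurableSet_Icc : MeasurableSet (Icc (0:ℝ) (2*π)))] with v hv
              exact max_le (hub u hu v) hC₀pos.le
            calc ∫ v, max (F (u, v)) 0 ∂μ ≤ ∫ _, C₀ ∂μ := this
              _ = (volume (Icc (0:ℝ) (2*π))).toReal * C₀ := by
                  rw [integral_const, hμ, measureReal_restrict_apply_univ]; rfl
              _ = 2*π * C₀ := by
                  rw [Real.volume_Icc]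
                  norm_num [ENNReal.toReal_ofReal, Real.pi_pos.le]
          have h4 : ∫ v, F (u, v) ∂μ = 2 * π * max (Real.log (norm (φ u))) (Real.log b) := hval
          rw [h4]
          linarith
      _ ≤ 2 * (2*π) * C₀ + 2*π * |Real.log b| := by
          have h5 : max (Real.log (norm (φ u))) (Real.log b) ≥ Real.log b := le_max_right _ _
          have h6 : Real.log b ≥ -|Real.log b| := neg_abs_le _
          nlinarith [Real.pi_pos]
  have hFnormaesm : AEStronglyMeasurable (fun u => ∫ v, ‖F (u, v)‖ ∂μ) μ :=
    (hFaesm.norm).integral_prod_right'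
  have hC₁ : Integrable (fun u => ∫ v, ‖F (u, v)‖ ∂μ) μ := by
    apply Integrable.mono' (integrable_const (2 * (2*π) * C₀ + 2*π * |Real.log b|)) hFnormaesm
    filter_upwards [haegood] with u hu
    rw [Real.norm_eq_abs, abs_of_nonneg (integral_nonneg (fun v => norm_nonneg _))]
    exact hbnd u hu.1 hu.2.1 hu.2.2
  have hslice : ∀ᵐ u ∂μ, Integrable (fun v => F (u, v)) μ := by
    filter_upwards [haegood] with u hu
    exact (hinner u hu.2.1 hu.2.2).1
  have hintF : Integrable F (μ.prod μ) := (integrable_prod_iff hFaesm).mpr ⟨hslice, hC₁⟩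
  constructor
  · rw [IntegrableOn, hprodmeas]
    exact hintF
  · have h1 : ∫ p in Icc (0:ℝ) (2*π) ×ˢ Icc (0:ℝ) (2*π), F p = ∫ p, F p ∂(μ.prod μ) := by
      rw [hprodmeas]
    rw [h1, integral_prod F hintF]
    have h2 : ∫ u, (∫ v, F (u, v) ∂μ) ∂μ
        = ∫ u, 2 * π * max (Real.log (norm (φ u))) (Real.log b) ∂μ := by
      apply integral_congr_ae
      filter_upwards [haegood] with u hu
      exact (hinner u hu.2.1 hu.2.2).2
    rw [h2, integral_const_mul]

lemma cos_eq_null (t : ℝ) : volume {u ∈ Icc (0:ℝ) (2*π) | Real.cos u = t} = 0 := by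
  apply measure_mono_null (t := {Real.arccos t, 2*π - Real.arccos t})
  · rintro u ⟨⟨h0, h2⟩, hc⟩
    simp only [Set.mem_insert_iff, Set.mem_singleton_iff]
    rcases le_or_gt u π with hup | hup
    · exact Or.inl (by rw [← hc, Real.arccos_cos h0 hup])
    · refine Or.inr ?_
      have h1 : Real.cos (2*π - u) = Real.cos u := Real.cos_two_pi_sub u
      have h2' := Real.arccos_cos (x := 2*π - u) (by linarith) (by linarith)
      rw [h1, hc] at h2'
      linarith
  · exact measure_union_null (measure_singleton _) (measure_singleton _)

lemma abs_sq_eq (α β u : ℝ) :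
    (norm ((α:ℂ) + (β:ℂ) * Complex.exp ((u:ℂ) * Complex.I)))^2
      = α^2 + β^2 + 2*α*β*Real.cos u := by
  rw [← Complex.normSq_eq_norm_sq, Complex.normSq_apply]
  have he : Complex.exp ((u:ℂ) * Complex.I)
      = (Real.cos u : ℂ) + (Real.sin u : ℂ) * Complex.I := by
    rw [Complex.exp_mul_I, ← Complex.ofReal_cos, ← Complex.ofReal_sin]
  rw [he]
  have hre : ((α:ℂ) + (β:ℂ) * ((Real.cos u : ℂ) + (Real.sin u : ℂ) * Complex.I)).re
      = α + β * Real.cos u := by simp [Complex.cos_ofReal_re]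
  have him : ((α:ℂ) + (β:ℂ) * ((Real.cos u : ℂ) + (Real.sin u : ℂ) * Complex.I)).im
      = β * Real.sin u := by simp [Complex.sin_ofReal_re]
  rw [hre, him]
  nlinarith [Real.sin_sq_add_cos_sq u]

lemma null_aux (α β : ℝ) (hα : α ≠ 0) (hβ : β ≠ 0) (b : ℝ) :
    volume {u ∈ Icc (0:ℝ) (2*π) |
      norm ((α:ℂ) + (β:ℂ) * Complex.exp ((u:ℂ) * Complex.I)) = b ∨
      (α:ℂ) + (β:ℂ) * Complex.exp ((u:ℂ) * Complex.I) = 0} = 0 := by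
  apply measure_mono_null (t := {u ∈ Icc (0:ℝ) (2*π) | Real.cos u = (b^2 - α^2 - β^2)/(2*α*β)}
    ∪ {u ∈ Icc (0:ℝ) (2*π) | Real.cos u = (0 - α^2 - β^2)/(2*α*β)})
  · rintro u ⟨hu, hc⟩
    have hαβ : 2*α*β ≠ 0 := mul_ne_zero (mul_ne_zero two_ne_zero hα) hβ
    rcases hc with h | h
    · refine Or.inl ⟨hu, ?_⟩
      have habs := abs_sq_eq α β u
      rw [h] at habs
      field_simp
      linarith
    · refine Or.inr ⟨hu, ?_⟩
      have h2 : norm ((α:ℂ) + (β:ℂ) * Complex.exp ((u:ℂ) * Complex.I)) = 0 := by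
        rw [h]; simp
      have habs := abs_sq_eq α β u
      rw [h2] at habs
      field_simp
      linarith
  · exact measure_union_null (cos_eq_null _) (cos_eq_null _)

lemma meas_cos_lt (x : ℝ) : volume {u ∈ Icc (0:ℝ) π | Real.cos u < x}
    = ENNReal.ofReal (π - Real.arccos (max (-1) (min 1 x))) := by
  rcases le_or_gt x (-1) with h | h
  · have hset : {u ∈ Icc (0:ℝ) π | Real.cos u < x} = ∅ := by
      ext u
      simp only [mem_sep_iff, mem_empty_iff_false, iff_false, not_and]
      intro _ hc
      nlinarith [Real.neg_one_le_cos u]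
    have hclip : max (-1:ℝ) (min 1 x) = -1 :=
      max_eq_left ((min_le_right _ _).trans h)
    rw [hset, hclip, Real.arccos_neg_one]
    simp
  · rcases le_or_gt x 1 with h1 | h1
    · have hclip : max (-1:ℝ) (min 1 x) = x := by
        rw [min_eq_right h1, max_eq_right h.le]
      rw [hclip]
      have harc : Real.arccos x ∈ Icc (0:ℝ) π := ⟨Real.arccos_nonneg x, Real.arccos_le_pi x⟩
      have hcx : Real.cos (Real.arccos x) = x := Real.cos_arccos h.le h1
      have hset : {u ∈ Icc (0:ℝ) π | Real.cos u < x} = Ioc (Real.arccos x) π := by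
        ext u
        simp only [mem_sep_iff, mem_Icc, mem_Ioc]
        constructor
        · rintro ⟨⟨h0, hπ⟩, hc⟩
          refine ⟨?_, hπ⟩
          rw [← hcx] at hc
          exact (Real.strictAntiOn_cos.lt_iff_gt ⟨h0, hπ⟩ harc).mp hc
        · rintro ⟨hlt, hπ⟩
          have h0 : 0 ≤ u := le_trans (Real.arccos_nonneg x) hlt.le
          refine ⟨⟨h0, hπ⟩, ?_⟩
          rw [← hcx]
          exact (Real.strictAntiOn_cos.lt_iff_gt ⟨h0, hπ⟩ harc).mpr hlt
      rw [hset, Real.volume_Ioc]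
    · have hclip : max (-1:ℝ) (min 1 x) = 1 := by
        rw [min_eq_left h1.le]
        exact max_eq_right (by norm_num)
      rw [hclip, Real.arccos_one]
      have hset : {u ∈ Icc (0:ℝ) π | Real.cos u < x} = Icc 0 π := by
        ext u
        simp only [mem_sep_iff, and_iff_left_iff_imp]
        intro _
        exact lt_of_le_of_lt (Real.cos_le_one u) h1
      rw [hset, Real.volume_Icc]


/-- The clipped angle `θ̄*(τ,s) = arccos(max(-1, min(1, cosh(τ/2) - e^{-s}/2)))`;
`θ̄*(τ,s)/π` is the limiting density of horizontal tiles at macroscopic position `(τ,s)`. -/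
noncomputable def thetaBar (τ s : ℝ) : ℝ :=
  Real.arccos (max (-1) (min 1 (Real.cosh (τ / 2) - Real.exp (-s) / 2)))


lemma rhs_eq (τ χ : ℝ) (hτ : 0 < τ) :
    ∫ s in Iic χ, (1 - thetaBar τ s / π)
      = (1/π) * ∫ u in Icc (0:ℝ) π,
          max (χ + Real.log (2*Real.cosh (τ/2) - 2*Real.cos u)) 0 := by
  set c : ℝ := Real.cosh (τ/2) with hcdef
  have hc : 1 < c := Real.one_lt_cosh.mpr (by positivity)
  set μ₁ : Measure ℝ := volume.restrict (Iic χ) with hμ₁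
  set μ₂ : Measure ℝ := volume.restrict (Icc (0:ℝ) π) with hμ₂
  set E : Set (ℝ × ℝ) := {p : ℝ × ℝ | Real.cos p.2 < c - Real.exp (-p.1)/2} with hE
  have hEopen : IsOpen E := by
    apply isOpen_lt
    · exact Real.continuous_cos.comp continuous_snd
    · exact continuous_const.sub ((Real.continuous_exp.comp continuous_fst.neg).div_const 2)
  have hEmeas : MeasurableSet E := hEopen.measurableSet
  -- pointwise identity for the integrand
  have hpt : ∀ s : ℝ, 1 - thetaBar τ s / π = (μ₂ (Prod.mk s ⁻¹' E)).toReal / π := by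
    intro s
    have hpre : Prod.mk s ⁻¹' E = {u : ℝ | Real.cos u < c - Real.exp (-s)/2} := rfl
    have h1 : μ₂ (Prod.mk s ⁻¹' E) = volume {u ∈ Icc (0:ℝ) π | Real.cos u < c - Real.exp (-s)/2} := by
      rw [hμ₂, hpre, Measure.restrict_apply (isOpen_lt Real.continuous_cos continuous_const).measurableSet]
      congr 1
      ext u
      simp [and_comm]
    rw [h1, meas_cos_lt, ENNReal.toReal_ofReal
      (by linarith [Real.arccos_le_pi (max (-1) (min 1 (c - Real.exp (-s)/2)))])]
    have hπ : (π:ℝ) ≠ 0 := Real.pi_ne_zero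
    rw [thetaBar, hcdef]
    field_simp
  simp only [hpt]
  -- pull out 1/π
  rw [MeasureTheory.integral_div, one_div]
  congr 1
  -- Tonelli / slicing
  have hfin2 : μ₂ univ < ⊤ := by
    rw [hμ₂, Measure.restrict_apply_univ, Real.volume_Icc]
    exact ENNReal.ofReal_lt_top
  have hstep1 : ∫ s, (μ₂ (Prod.mk s ⁻¹' E)).toReal ∂μ₁ = ((μ₁.prod μ₂) E).toReal := by
    rw [Measure.prod_apply hEmeas]
    exact integral_toReal (measurable_measure_prodMk_left hEmeas).aemeasurable
      (Filter.Eventually.of_forall fun s =>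
        lt_of_le_of_lt (measure_mono (subset_univ _)) hfin2)
  rw [hstep1, Measure.prod_apply_symm hEmeas]
  -- inner slice in s
  have hq : ∀ u : ℝ, 0 < 2*c - 2*Real.cos u := by
    intro u
    nlinarith [Real.cos_le_one u]
  have hslice : ∀ u : ℝ, ((fun s => (s, u)) ⁻¹' E) = Ioi (-Real.log (2*c - 2*Real.cos u)) := by
    intro u
    ext s
    simp only [hE, mem_preimage, mem_setOf_eq, mem_Ioi]
    rw [show c - Real.exp (-s)/2 = c - Real.exp (-s)/2 from rfl]
    constructor
    · intro h
      have h2 : Real.exp (-s) < 2*c - 2*Real.cos u := by linarith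
      have := (Real.lt_log_iff_exp_lt (hq u)).mpr h2
      linarith
    · intro h
      have h2 : -s < Real.log (2*c - 2*Real.cos u) := by linarith
      have := (Real.lt_log_iff_exp_lt (hq u)).mp h2
      linarith
  have hμ₁slice : ∀ u : ℝ, μ₁ ((fun s => (s, u)) ⁻¹' E)
      = ENNReal.ofReal (χ + Real.log (2*c - 2*Real.cos u)) := by
    intro u
    rw [hslice u, hμ₁, Measure.restrict_apply measurableSet_Ioi]
    have : Ioi (-Real.log (2*c - 2*Real.cos u)) ∩ Iic χ
        = Ioc (-Real.log (2*c - 2*Real.cos u)) χ := by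
      ext s; simp [mem_Ioc, mem_Ioi, mem_Iic, and_comm]
    rw [this, Real.volume_Ioc]
    congr 1
    ring
  have hGcont : Continuous fun u : ℝ => max (χ + Real.log (2*c - 2*Real.cos u)) 0 := by
    apply Continuous.max _ continuous_const
    apply continuous_const.add
    exact Continuous.log (continuous_const.sub (continuous_const.mul Real.continuous_cos))
      (fun u => ne_of_gt (hq u))
  have hcongr : ∫⁻ u, μ₁ ((fun s => (s, u)) ⁻¹' E) ∂μ₂
      = ∫⁻ u, ENNReal.ofReal (max (χ + Real.log (2*c - 2*Real.cos u)) 0) ∂μ₂ := by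
    apply lintegral_congr
    intro u
    rw [hμ₁slice u]
    rcases le_or_gt 0 (χ + Real.log (2*c - 2*Real.cos u)) with h | h
    · rw [max_eq_left h]
    · rw [max_eq_right h.le, ENNReal.ofReal_of_nonpos h.le, ENNReal.ofReal_zero]
  rw [hcongr]
  have hB := integral_eq_lintegral_of_nonneg_ae (μ := μ₂)
    (f := fun u : ℝ => max (χ + Real.log (2*c - 2*Real.cos u)) 0)
    (Filter.Eventually.of_forall fun u => le_max_right _ _)
    hGcont.aestronglyMeasurable
  rw [hB, div_eq_mul_inv, mul_comm]

/-- The Cerf–Kenyon (Ronkin-function) parametrization of the limit shape: for `(τ,χ)`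
in the bulk and `A = e^{χ/2+τ/4}`, `B = e^{χ/2-τ/4}`, the function
`(u,v) ↦ ln|1 + A e^{iu} + B e^{iv}|` is integrable on `[0,2π]²` and
`(1/2π²) ∬ ln|1 + A e^{iu} + B e^{iv}| du dv = ∫_{-∞}^{χ} (1 - θ̄*(τ,s)/π) ds`. -/
theorem limit_shape_ronkin (τ χ : ℝ) (hτ : 0 < τ)
    (hbulk₁ : -1 < Real.cosh (τ / 2) - Real.exp (-χ) / 2)
    (hbulk₂ : Real.cosh (τ / 2) - Real.exp (-χ) / 2 < 1)
    (A B : ℝ) (hA : A = Real.exp (χ / 2 + τ / 4)) (hB : B = Real.exp (χ / 2 - τ / 4)) :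
    MeasureTheory.IntegrableOn
      (fun p : ℝ × ℝ =>
        Real.log (norm
          (1 + (A : ℂ) * Complex.exp ((p.1 : ℂ) * Complex.I) +
            (B : ℂ) * Complex.exp ((p.2 : ℂ) * Complex.I))))
      (Set.Icc 0 (2 * Real.pi) ×ˢ Set.Icc 0 (2 * Real.pi)) MeasureTheory.volume ∧
    (1 / (2 * Real.pi ^ 2)) *
        ∫ p in Set.Icc (0 : ℝ) (2 * Real.pi) ×ˢ Set.Icc (0 : ℝ) (2 * Real.pi),
          Real.log (norm
            (1 + (A : ℂ) * Complex.exp ((p.1 : ℂ) * Complex.I) +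
              (B : ℂ) * Complex.exp ((p.2 : ℂ) * Complex.I))) =
      ∫ s in Set.Iic χ, (1 - thetaBar τ s / Real.pi) := by

  have hπ : (0:ℝ) < π := Real.pi_pos
  have hApos : 0 < A := by rw [hA]; exact Real.exp_pos _
  have hBpos : 0 < B := by rw [hB]; exact Real.exp_pos _
  have hBA : B < A := by rw [hA, hB]; exact Real.exp_lt_exp.mpr (by linarith)
  have hcexp : Continuous fun u : ℝ => Complex.exp ((u:ℂ) * Complex.I) :=
    Complex.continuous_exp.comp (Complex.continuous_ofReal.mul continuous_const)
  -- null sets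
  have hnull1 : volume {u ∈ Icc (0:ℝ) (2*π) |
      norm ((1:ℂ) + (A:ℂ) * Complex.exp ((u:ℂ) * Complex.I)) = B ∨
      (1:ℂ) + (A:ℂ) * Complex.exp ((u:ℂ) * Complex.I) = 0} = 0 := by
    simpa using null_aux 1 A one_ne_zero hApos.ne' B
  have hnull2 : volume {u ∈ Icc (0:ℝ) (2*π) |
      norm ((A:ℂ) + Complex.exp ((u:ℂ) * Complex.I)) = B ∨
      (A:ℂ) + Complex.exp ((u:ℂ) * Complex.I) = 0} = 0 := by
    simpa using null_aux A 1 hApos.ne' one_ne_zero B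
  have hnull3 : volume {u ∈ Icc (0:ℝ) (2*π) |
      norm ((A:ℂ) + (B:ℂ) * Complex.exp ((u:ℂ) * Complex.I)) = 1 ∨
      (A:ℂ) + (B:ℂ) * Complex.exp ((u:ℂ) * Complex.I) = 0} = 0 := by
    simpa using null_aux A B hApos.ne' hBpos.ne' 1
  obtain ⟨hIint, hIval⟩ := prod_lemma (fun u => (1:ℂ) + (A:ℂ) * Complex.exp ((u:ℂ) * Complex.I))
    (continuous_const.add (continuous_const.mul hcexp)) B hBpos hnull1
  obtain ⟨hJint, hJval⟩ := prod_lemma (fun u => (A:ℂ) + Complex.exp ((u:ℂ) * Complex.I))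
    (continuous_const.add hcexp) B hBpos hnull2
  obtain ⟨hKint, hKval⟩ := prod_lemma (fun u => (A:ℂ) + (B:ℂ) * Complex.exp ((u:ℂ) * Complex.I))
    (continuous_const.add (continuous_const.mul hcexp)) 1 one_pos hnull3
  refine ⟨hIint, ?_⟩
  -- flip identity |1 + A e^{iu}| = |A + e^{iu}|
  have hflip : ∀ u : ℝ, norm ((A:ℂ) + Complex.exp ((u:ℂ) * Complex.I))
      = norm ((1:ℂ) + (A:ℂ) * Complex.exp ((u:ℂ) * Complex.I)) := by
    intro u
    have h1 := abs_sq_eq A 1 u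
    have h2 := abs_sq_eq 1 A u
    rw [Complex.ofReal_one, one_mul] at h1
    rw [Complex.ofReal_one] at h2
    have hsq : (norm ((A:ℂ) + Complex.exp ((u:ℂ) * Complex.I)))^2
        = (norm ((1:ℂ) + (A:ℂ) * Complex.exp ((u:ℂ) * Complex.I)))^2 := by
      rw [h1, h2]; ring
    calc norm ((A:ℂ) + Complex.exp ((u:ℂ) * Complex.I))
        = Real.sqrt ((norm ((A:ℂ) + Complex.exp ((u:ℂ) * Complex.I)))^2) :=
          (Real.sqrt_sq (norm_nonneg _)).symm
      _ = Real.sqrt ((norm ((1:ℂ) + (A:ℂ) * Complex.exp ((u:ℂ) * Complex.I)))^2) := by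
          rw [hsq]
      _ = norm ((1:ℂ) + (A:ℂ) * Complex.exp ((u:ℂ) * Complex.I)) :=
          Real.sqrt_sq (norm_nonneg _)
  have hmaxeq : ∫ u in Icc (0:ℝ) (2*π),
        max (Real.log (norm ((1:ℂ) + (A:ℂ) * Complex.exp ((u:ℂ) * Complex.I)))) (Real.log B)
      = ∫ u in Icc (0:ℝ) (2*π),
        max (Real.log (norm ((A:ℂ) + Complex.exp ((u:ℂ) * Complex.I)))) (Real.log B) := by
    apply integral_congr_ae
    refine Filter.Eventually.of_forall fun u => ?_
    show max (Real.log (norm ((1:ℂ) + (A:ℂ) * Complex.exp ((u:ℂ) * Complex.I)))) (Real.log B)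
      = max (Real.log (norm ((A:ℂ) + Complex.exp ((u:ℂ) * Complex.I)))) (Real.log B)
    rw [hflip u]
  -- swap step
  set F₂ : ℝ × ℝ → ℝ := fun p =>
    Real.log (norm ((A:ℂ) + Complex.exp ((p.1:ℂ) * Complex.I)
      + (B:ℂ) * Complex.exp ((p.2:ℂ) * Complex.I))) with hF₂
  set F₃ : ℝ × ℝ → ℝ := fun p =>
    Real.log (norm ((A:ℂ) + (B:ℂ) * Complex.exp ((p.1:ℂ) * Complex.I)
      + Complex.exp ((p.2:ℂ) * Complex.I))) with hF₃
  have hmeasprod : (volume : Measure (ℝ×ℝ)).restrict (Icc (0:ℝ) (2*π) ×ˢ Icc (0:ℝ) (2*π))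
      = (volume.restrict (Icc (0:ℝ) (2*π))).prod (volume.restrict (Icc (0:ℝ) (2*π))) := by
    rw [Measure.prod_restrict, ← Measure.volume_eq_prod]
  have hswapeq : ∀ p : ℝ × ℝ, F₃ p = F₂ (Prod.swap p) := by
    intro p
    simp only [hF₂, hF₃, Prod.snd_swap, Prod.fst_swap]
    congr 2
    ring
  have hswap : ∫ p in Icc (0:ℝ) (2*π) ×ˢ Icc (0:ℝ) (2*π), F₃ p
      = ∫ p in Icc (0:ℝ) (2*π) ×ˢ Icc (0:ℝ) (2*π), F₂ p := by
    have e1 : ∫ p in Icc (0:ℝ) (2*π) ×ˢ Icc (0:ℝ) (2*π), F₃ p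
        = ∫ p, F₂ (Prod.swap p)
            ∂((volume.restrict (Icc (0:ℝ) (2*π))).prod (volume.restrict (Icc (0:ℝ) (2*π)))) := by
      rw [hmeasprod]
      exact integral_congr_ae (Filter.Eventually.of_forall fun p => hswapeq p)
    rw [e1, integral_prod_swap F₂, hmeasprod]
  -- arithmetic facts about A, B
  have hA2 : A^2 = Real.exp χ * Real.exp (τ/2) := by
    rw [hA, pow_two, ← Real.exp_add, ← Real.exp_add]; congr 1; ring
  have hB2 : B^2 = Real.exp χ * Real.exp (-(τ/2)) := by
    rw [hB, pow_two, ← Real.exp_add, ← Real.exp_add]; congr 1; ring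
  have hABe : A * B = Real.exp χ := by
    rw [hA, hB, ← Real.exp_add]; congr 1; ring
  have hABsq : ∀ u : ℝ, (norm ((A:ℂ) + (B:ℂ) * Complex.exp ((u:ℂ) * Complex.I)))^2
      = Real.exp χ * (2 * Real.cosh (τ/2) + 2 * Real.cos u) := by
    intro u
    rw [abs_sq_eq, Real.cosh_eq, hA2, hB2]
    have : 2*A*B = 2 * Real.exp χ := by rw [mul_assoc, hABe]
    rw [this]
    ring
  have hcosh1 : 1 < Real.cosh (τ/2) := Real.one_lt_cosh.mpr (by positivity)
  have hposG : ∀ u : ℝ, 0 < 2 * Real.cosh (τ/2) + 2 * Real.cos u := by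
    intro u; nlinarith [Real.neg_one_le_cos u]
  have hposH : ∀ u : ℝ, 0 < 2 * Real.cosh (τ/2) - 2 * Real.cos u := by
    intro u; nlinarith [Real.cos_le_one u]
  have habspos : ∀ u : ℝ, 0 < norm ((A:ℂ) + (B:ℂ) * Complex.exp ((u:ℂ) * Complex.I)) := by
    intro u
    rcases (norm_nonneg ((A:ℂ) + (B:ℂ) * Complex.exp ((u:ℂ) * Complex.I))).eq_or_lt with h | h
    · exfalso
      have := hABsq u
      rw [← h] at this
      have h2 : (0:ℝ) < Real.exp χ * (2 * Real.cosh (τ/2) + 2 * Real.cos u) := by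
        have := hposG u; positivity
      simp only [ne_eq, OfNat.ofNat_ne_zero, not_false_eq_true, zero_pow] at this
      linarith
    · exact h
  -- step 5: pointwise identity
  have hstep5 : ∀ u : ℝ,
      max (Real.log (norm ((A:ℂ) + (B:ℂ) * Complex.exp ((u:ℂ) * Complex.I)))) 0
        = (1/2) * max (χ + Real.log (2 * Real.cosh (τ/2) + 2 * Real.cos u)) 0 := by
    intro u
    have h2log : χ + Real.log (2 * Real.cosh (τ/2) + 2 * Real.cos u)
        = 2 * Real.log (norm ((A:ℂ) + (B:ℂ) * Complex.exp ((u:ℂ) * Complex.I))) := by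
      calc χ + Real.log (2 * Real.cosh (τ/2) + 2 * Real.cos u)
          = Real.log (Real.exp χ) + Real.log (2 * Real.cosh (τ/2) + 2 * Real.cos u) := by
            rw [Real.log_exp]
        _ = Real.log (Real.exp χ * (2 * Real.cosh (τ/2) + 2 * Real.cos u)) :=
            (Real.log_mul (Real.exp_ne_zero χ) (ne_of_gt (hposG u))).symm
        _ = Real.log ((norm ((A:ℂ) + (B:ℂ) * Complex.exp ((u:ℂ) * Complex.I)))^2) := by
            rw [← hABsq u]
        _ = 2 * Real.log (norm ((A:ℂ) + (B:ℂ) * Complex.exp ((u:ℂ) * Complex.I))) := by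
            rw [Real.log_pow]; norm_num
    rw [h2log, mul_max_of_nonneg _ _ (by norm_num : (0:ℝ) ≤ 1/2)]
    congr 1 <;> ring
  -- step 6: interval symmetry
  set G : ℝ → ℝ := fun v => max (χ + Real.log (2 * Real.cosh (τ/2) + 2 * Real.cos v)) 0 with hG
  set Hf : ℝ → ℝ := fun v => max (χ + Real.log (2 * Real.cosh (τ/2) - 2 * Real.cos v)) 0 with hHf
  have hGc : Continuous G := by
    apply Continuous.max _ continuous_const
    apply continuous_const.add
    exact Continuous.log (continuous_const.add (continuous_const.mul Real.continuous_cos))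
      (fun u => ne_of_gt (hposG u))
  have hHc : Continuous Hf := by
    apply Continuous.max _ continuous_const
    apply continuous_const.add
    exact Continuous.log (continuous_const.sub (continuous_const.mul Real.continuous_cos))
      (fun u => ne_of_gt (hposH u))
  have hstep6 : ∫ v in Icc (0:ℝ) (2*π), G v = 2 * ∫ v in Icc (0:ℝ) π, Hf v := by
    rw [MeasureTheory.integral_Icc_eq_integral_Ioc, ← intervalIntegral.integral_of_le (by positivity),
      MeasureTheory.integral_Icc_eq_integral_Ioc, ← intervalIntegral.integral_of_le hπ.le]
    have hsplit := intervalIntegral.integral_add_adjacent_intervals (a := (0:ℝ)) (b := π)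
      (c := 2*π) (f := G) (μ := volume) (hGc.intervalIntegrable _ _) (hGc.intervalIntegrable _ _)
    have h2 : ∫ v in π..(2*π), G v = ∫ v in (0:ℝ)..π, Hf v := by
      have hcomp := intervalIntegral.integral_comp_add_right (a := (0:ℝ)) (b := π) (f := G) π
      rw [show (0:ℝ)+π = π by ring, show π+π = 2*π by ring] at hcomp
      rw [← hcomp]
      apply intervalIntegral.integral_congr
      intro x _
      simp only [hG, hHf, Real.cos_add_pi]
      ring_nf
    have h3 : ∫ v in (0:ℝ)..π, G v = ∫ v in (0:ℝ)..π, Hf v := by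
      have hcomp := intervalIntegral.integral_comp_sub_left (a := (0:ℝ)) (b := π) (f := G) π
      rw [show π-π = (0:ℝ) by ring, show π-(0:ℝ) = π by ring] at hcomp
      rw [← hcomp]
      apply intervalIntegral.integral_congr
      intro x _
      simp only [hG, hHf, Real.cos_pi_sub]
      ring_nf
    linarith
  -- assemble
  have hE6 : ∫ u in Icc (0:ℝ) (2*π),
      max (Real.log (norm ((A:ℂ) + (B:ℂ) * Complex.exp ((u:ℂ) * Complex.I)))) (Real.log 1)
        = (1/2) * ∫ v in Icc (0:ℝ) (2*π), G v := by
    rw [← integral_const_mul]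
    apply integral_congr_ae
    refine Filter.Eventually.of_forall fun u => ?_
    show max (Real.log (norm ((A:ℂ) + (B:ℂ) * Complex.exp ((u:ℂ) * Complex.I)))) (Real.log 1)
      = (1/2) * G u
    rw [Real.log_one, hstep5 u]
  have hL : ∫ p in Icc (0:ℝ) (2*π) ×ˢ Icc (0:ℝ) (2*π),
      Real.log (norm
        (1 + (A : ℂ) * Complex.exp ((p.1 : ℂ) * Complex.I) +
          (B : ℂ) * Complex.exp ((p.2 : ℂ) * Complex.I)))
      = 2 * π * ∫ v in Icc (0:ℝ) π, Hf v := by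
    calc ∫ p in Icc (0:ℝ) (2*π) ×ˢ Icc (0:ℝ) (2*π),
        Real.log (norm
          (1 + (A : ℂ) * Complex.exp ((p.1 : ℂ) * Complex.I) +
            (B : ℂ) * Complex.exp ((p.2 : ℂ) * Complex.I)))
        = 2 * π * ∫ u in Icc (0:ℝ) (2*π),
            max (Real.log (norm ((1:ℂ) + (A:ℂ) * Complex.exp ((u:ℂ) * Complex.I))))
              (Real.log B) := hIval
      _ = 2 * π * ∫ u in Icc (0:ℝ) (2*π),
            max (Real.log (norm ((A:ℂ) + Complex.exp ((u:ℂ) * Complex.I))))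
              (Real.log B) := by rw [hmaxeq]
      _ = ∫ p in Icc (0:ℝ) (2*π) ×ˢ Icc (0:ℝ) (2*π), F₂ p := hJval.symm
      _ = ∫ p in Icc (0:ℝ) (2*π) ×ˢ Icc (0:ℝ) (2*π), F₃ p := hswap.symm
      _ = 2 * π * ∫ u in Icc (0:ℝ) (2*π),
            max (Real.log (norm ((A:ℂ) + (B:ℂ) * Complex.exp ((u:ℂ) * Complex.I))))
              (Real.log 1) := by
          have hKval' := hKval
          rw [Complex.ofReal_one] at hKval'
          simp only [one_mul] at hKval'
          exact hKval'
      _ = 2 * π * ((1/2) * ∫ v in Icc (0:ℝ) (2*π), G v) := by rw [hE6]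
      _ = 2 * π * ((1/2) * (2 * ∫ v in Icc (0:ℝ) π, Hf v)) := by rw [hstep6]
      _ = 2 * π * ∫ v in Icc (0:ℝ) π, Hf v := by ring
  rw [hL, rhs_eq τ χ hτ]
  have hπ2 : π^2 ≠ 0 := by positivity
  rw [show ∫ u in Icc (0:ℝ) π, max (χ + Real.log (2*Real.cosh (τ/2) - 2*Real.cos u)) 0 = ∫ v in Icc (0:ℝ) π, Hf v from rfl]
  field_simp
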